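/- Fix 0 < r < 1 and define β(r,p) := ln((1−p)/(1−rp)) / (ln r + ln((1−p)/(1−rp))) for 0 < p < 1. Then the function p ↦ β(r,p)/p is strictly increasing on (0,1). -/

import Mathlib

open Set

/-- Classical bound: `2 log x < x - x⁻¹` for `x > 1`. -/
private lemma aux_two_log_lt {x : ℝ} (hx : 1 < x) : 2 * Real.log x < x - x⁻¹ := by
  set g : ℝ → ℝ := fun t => t - t⁻¹ - 2 * Real.log t with hg
  have hd : ∀ t : ℝ, t ∈ Set.Ici (1:ℝ) → HasDerivAt g (1 - (-(t^2)⁻¹) - 2 * t⁻¹) t := by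
    intro t ht
    have ht0 : t ≠ 0 := by
      have : (0:ℝ) < t := lt_of_lt_of_le one_pos ht
      exact ne_of_gt this
    exact ((hasDerivAt_id t).sub (hasDerivAt_inv ht0)).sub
      ((Real.hasDerivAt_log ht0).const_mul 2)
  have hmono : StrictMonoOn g (Set.Ici 1) := by
    apply strictMonoOn_of_deriv_pos (convex_Ici 1)
    · exact fun t ht => ((hd t ht).continuousAt).continuousWithinAt
    · intro t ht
      rw [interior_Ici] at ht
      have ht1 : (1:ℝ) < t := ht
      have ht0 : (0:ℝ) < t := lt_trans one_pos ht1
      rw [(hd t (le_of_lt ht1)).deriv]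
      have heq : 1 - (-(t^2)⁻¹) - 2 * t⁻¹ = (1 - t⁻¹)^2 := by
        field_simp
        ring
      rw [heq]
      have hne : 1 - t⁻¹ ≠ 0 := by
        have : t⁻¹ < 1 := by
          rw [inv_lt_one_iff₀]
          right; exact ht1
        linarith
      positivity
  have h1 : g 1 < g x := hmono (Set.mem_Ici.mpr (le_refl 1)) (Set.mem_Ici.mpr (le_of_lt hx)) hx
  have hg1 : g 1 = 0 := by simp [hg]
  rw [hg1] at h1
  simp only [hg] at h1
  linarith

/-- Classical bound: `log r < 2(r-1)/(r+1)` for `0 < r < 1`. -/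
private lemma aux_log_lt_harmonic {r : ℝ} (hr0 : 0 < r) (hr1 : r < 1) :
    Real.log r < 2 * (r - 1) / (r + 1) := by
  set g : ℝ → ℝ := fun t => 2 * (t - 1) / (t + 1) - Real.log t with hg
  have hd : ∀ t : ℝ, t ∈ Set.Ioc (0:ℝ) 1 →
      HasDerivAt g ((2 * 1 * (t + 1) - 2 * (t - 1) * 1) / (t + 1)^2 - t⁻¹) t := by
    intro t ht
    have ht0 : t ≠ 0 := ne_of_gt ht.1
    have ht1 : t + 1 ≠ 0 := by nlinarith [ht.1]
    exact ((((hasDerivAt_id t).sub_const 1).const_mul 2).div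
      ((hasDerivAt_id t).add_const 1) ht1).sub (Real.hasDerivAt_log ht0)
  have hanti : StrictAntiOn g (Set.Ioc 0 1) := by
    apply strictAntiOn_of_deriv_neg (convex_Ioc 0 1)
    · exact fun t ht => ((hd t ht).continuousAt).continuousWithinAt
    · intro t ht
      rw [interior_Ioc] at ht
      have ht0 : (0:ℝ) < t := ht.1
      have ht1 : t < 1 := ht.2
      rw [(hd t ⟨ht0, le_of_lt ht1⟩).deriv]
      have heq : (2 * 1 * (t + 1) - 2 * (t - 1) * 1) / (t + 1)^2 - t⁻¹
          = -((t - 1)^2 / (t * (t + 1)^2)) := by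
        field_simp
        ring
      rw [heq]
      have hpos : 0 < (t - 1)^2 / (t * (t + 1)^2) := by
        have h1 : t - 1 ≠ 0 := by linarith
        positivity
      linarith
  have h1 : g 1 < g r := hanti (by constructor <;> linarith) (by norm_num) hr1
  have hg1 : g 1 = 0 := by norm_num [hg]
  rw [hg1] at h1
  simp only [hg] at h1
  have : 0 < 2 * (r - 1) / (r + 1) - Real.log r := h1
  linarith

/-- Positivity of `a z = log(1-rz) - log(1-z)`. -/
private lemma aux_a_pos {r z : ℝ} (hr0 : 0 < r) (hr1 : r < 1) (hz0 : 0 < z) (hz1 : z < 1) :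
    0 < Real.log (1 - r*z) - Real.log (1 - z) := by
  have h1 : 0 < 1 - z := by linarith
  have h2 : 1 - z < 1 - r*z := by nlinarith
  have := Real.log_lt_log h1 h2
  linarith

set_option maxHeartbeats 1000000 in
/-- The core inequality: `a(a+b) < b·z(1-r)/((1-z)(1-rz))`. -/
private lemma core_ineq (r : ℝ) (hr0 : 0 < r) (hr1 : r < 1) {p : ℝ}
    (hp0 : 0 < p) (hp1 : p < 1) :
    (Real.log (1 - r*p) - Real.log (1 - p)) *
      ((Real.log (1 - r*p) - Real.log (1 - p)) + -Real.log r)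
      < -Real.log r * (p * (1 - r) / ((1 - p) * (1 - r*p))) := by
  set G : ℝ → ℝ := fun z => -Real.log r * (z * (1 - r) / ((1 - z) * (1 - r*z)))
    - (Real.log (1 - r*z) - Real.log (1 - z)) *
      ((Real.log (1 - r*z) - Real.log (1 - z)) + -Real.log r) with hG
  have hderiv : ∀ z : ℝ, 0 ≤ z → z < 1 → HasDerivAt G
      (-Real.log r * (((1 - r) * ((1 - z) * (1 - r*z)) -
          z * (1 - r) * (-1 * (1 - r*z) + (1 - z) * -r)) / ((1 - z) * (1 - r*z))^2)
        - ((-r / (1 - r*z) - -1 / (1 - z)) *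
            ((Real.log (1 - r*z) - Real.log (1 - z)) + -Real.log r)
          + (Real.log (1 - r*z) - Real.log (1 - z)) *
            (-r / (1 - r*z) - -1 / (1 - z)))) z := by
    intro z hz0 hz1
    have h1z : 0 < 1 - z := by linarith
    have h1rz : 0 < 1 - r*z := by nlinarith
    have h1 : HasDerivAt (fun z : ℝ => 1 - r*z) (-r) z := by
      simpa using ((hasDerivAt_id' z).const_mul r).const_sub 1
    have h2 : HasDerivAt (fun z : ℝ => 1 - z) (-1) z := by
      simpa using (hasDerivAt_id' z).const_sub 1
    have hA : HasDerivAt (fun z => Real.log (1 - r*z) - Real.log (1 - z))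
        (-r / (1 - r*z) - -1 / (1 - z)) z :=
      (h1.log (ne_of_gt h1rz)).sub (h2.log (ne_of_gt h1z))
    have hN : HasDerivAt (fun z : ℝ => z * (1 - r)) (1 - r) z := by
      simpa using (hasDerivAt_id z).mul_const (1 - r)
    have hDen : HasDerivAt (fun z : ℝ => (1 - z) * (1 - r*z))
        (-1 * (1 - r*z) + (1 - z) * -r) z := h2.mul h1
    have hC : HasDerivAt (fun z : ℝ => z * (1 - r) / ((1 - z) * (1 - r*z)))
        (((1 - r) * ((1 - z) * (1 - r*z)) -
          z * (1 - r) * (-1 * (1 - r*z) + (1 - z) * -r)) / ((1 - z) * (1 - r*z))^2) z :=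
      hN.div hDen (ne_of_gt (mul_pos h1z h1rz))
    exact (hC.const_mul (-Real.log r)).sub (hA.mul (hA.add_const (-Real.log r)))
  have hmono : StrictMonoOn G (Set.Ico 0 1) := by
    apply strictMonoOn_of_deriv_pos (convex_Ico 0 1)
    · exact fun z hz => ((hderiv z hz.1 hz.2).continuousAt).continuousWithinAt
    · intro z hz
      rw [interior_Ico] at hz
      obtain ⟨hz0, hz1⟩ := hz
      rw [(hderiv z (le_of_lt hz0) hz1).deriv]
      have h1z : 0 < 1 - z := by linarith
      have h1rz : 0 < 1 - r*z := by nlinarith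
      set a := Real.log (1 - r*z) - Real.log (1 - z) with ha
      set b := -Real.log r with hb
      have key : b * (((1 - r) * ((1 - z) * (1 - r*z)) -
          z * (1 - r) * (-1 * (1 - r*z) + (1 - z) * -r)) / ((1 - z) * (1 - r*z))^2)
        - ((-r / (1 - r*z) - -1 / (1 - z)) * (a + b)
          + a * (-r / (1 - r*z) - -1 / (1 - z)))
          = (1 - r) * (b * z * (1 + r - 2*r*z) - 2 * a * ((1 - z) * (1 - r*z)))
            / ((1 - z) * (1 - r*z))^2 := by
        field_simp
        ring
      rw [key]
      apply div_pos _ (pow_pos (mul_pos h1z h1rz) 2)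
      apply mul_pos (by linarith)
      -- need: 2·a·((1-z)(1-rz)) < b·z·(1+r-2rz)
      have hx : 1 < (1 - r*z) / (1 - z) := by
        rw [lt_div_iff₀ h1z]
        nlinarith
      have hlog := aux_two_log_lt hx
      have hlogx : Real.log ((1 - r*z) / (1 - z)) = a := by
        rw [Real.log_div (ne_of_gt h1rz) (ne_of_gt h1z)]
      have hxval : (1 - r*z) / (1 - z) - ((1 - r*z) / (1 - z))⁻¹
          = ((1 - r*z)^2 - (1 - z)^2) / ((1 - z) * (1 - r*z)) := by
        rw [inv_div]
        field_simp
      rw [hlogx, hxval] at hlog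
      have hub : 2 * a * ((1 - z) * (1 - r*z)) < (1 - r*z)^2 - (1 - z)^2 := by
        have := (lt_div_iff₀ (by positivity : (0:ℝ) < (1 - z) * (1 - r*z))).mp hlog
        linarith
      have hbge : 2 * (1 - r) / (1 + r) ≤ b := by
        have h := aux_log_lt_harmonic hr0 hr1
        have hr1' : r + 1 ≠ 0 := by linarith
        have heq : -(2 * (r - 1) / (r + 1)) = 2 * (1 - r) / (1 + r) := by
          field_simp
          ring
        rw [hb]
        linarith [neg_lt_neg h, heq]
      have hk : 0 < 1 + r - 2*r*z := by nlinarith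
      have h5 : 2 * (1 - r) / (1 + r) * (z * (1 + r - 2*r*z)) ≤ b * (z * (1 + r - 2*r*z)) :=
        mul_le_mul_of_nonneg_right hbge (by positivity)
      have h6 : (1 - r*z)^2 - (1 - z)^2 ≤ 2 * (1 - r) / (1 + r) * (z * (1 + r - 2*r*z)) := by
        rw [div_mul_eq_mul_div, le_div_iff₀ (by linarith : (0:ℝ) < 1 + r)]
        have hterm : (0:ℝ) ≤ (1 - r)^3 * z^2 :=
          mul_nonneg (pow_nonneg (by linarith) 3) (sq_nonneg z)
        nlinarith [hterm]
      have h7 : 2 * a * ((1 - z) * (1 - r*z)) < b * (z * (1 + r - 2*r*z)) :=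
        lt_of_lt_of_le hub (h6.trans h5)
      clear_value a b
      nlinarith [h7]
  have h0m : (0:ℝ) ∈ Set.Ico (0:ℝ) 1 := by constructor <;> norm_num
  have hpm : p ∈ Set.Ico (0:ℝ) 1 := ⟨le_of_lt hp0, hp1⟩
  have hGG := hmono h0m hpm hp0
  have hG0 : G 0 = 0 := by norm_num [hG]
  rw [hG0] at hGG
  simp only [hG] at hGG
  linarith

/-- The function β(r,p). -/
noncomputable def betaFn (r p : ℝ) : ℝ :=
  Real.log ((1 - p) / (1 - r * p)) / (Real.log r + Real.log ((1 - p) / (1 - r * p)))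

theorem stmt_16 (r : ℝ) (hr0 : 0 < r) (hr1 : r < 1) :
    StrictMonoOn (fun p : ℝ => betaFn r p / p) (Set.Ioo 0 1) := by
  have hb : 0 < -Real.log r := by
    have := Real.log_neg hr0 hr1
    linarith
  set b := -Real.log r with hbdef
  set H : ℝ → ℝ := fun z => z + b * (z / (Real.log (1 - r*z) - Real.log (1 - z))) with hH
  have hderiv : ∀ z : ℝ, 0 < z → z < 1 → HasDerivAt H
      (1 + b * ((1 * (Real.log (1 - r*z) - Real.log (1 - z))
        - z * (-r / (1 - r*z) - -1 / (1 - z)))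
          / (Real.log (1 - r*z) - Real.log (1 - z))^2)) z := by
    intro z hz0 hz1
    have h1z : 0 < 1 - z := by linarith
    have h1rz : 0 < 1 - r*z := by nlinarith
    have hap := aux_a_pos hr0 hr1 hz0 hz1
    have h1 : HasDerivAt (fun z : ℝ => 1 - r*z) (-r) z := by
      simpa using ((hasDerivAt_id' z).const_mul r).const_sub 1
    have h2 : HasDerivAt (fun z : ℝ => 1 - z) (-1) z := by
      simpa using (hasDerivAt_id' z).const_sub 1
    have hA : HasDerivAt (fun z => Real.log (1 - r*z) - Real.log (1 - z))
        (-r / (1 - r*z) - -1 / (1 - z)) z :=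
      (h1.log (ne_of_gt h1rz)).sub (h2.log (ne_of_gt h1z))
    exact (hasDerivAt_id z).add
      (((hasDerivAt_id z).div hA (ne_of_gt hap)).const_mul b)
  have hanti : StrictAntiOn H (Set.Ioo 0 1) := by
    apply strictAntiOn_of_deriv_neg (convex_Ioo 0 1)
    · exact fun z hz => ((hderiv z hz.1 hz.2).continuousAt).continuousWithinAt
    · intro z hz
      rw [interior_Ioo] at hz
      obtain ⟨hz0, hz1⟩ := hz
      rw [(hderiv z hz0 hz1).deriv]
      have h1z : 0 < 1 - z := by linarith
      have h1rz : 0 < 1 - r*z := by nlinarith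
      have hap := aux_a_pos hr0 hr1 hz0 hz1
      set a := Real.log (1 - r*z) - Real.log (1 - z) with ha
      have key : 1 + b * ((1 * a - z * (-r / (1 - r*z) - -1 / (1 - z))) / a^2)
          = (a * (a + b) - b * (z * (1 - r) / ((1 - z) * (1 - r*z)))) / a^2
            + (b * (z * (1 - r) / ((1 - z) * (1 - r*z)))
              - b * (z * (1 - r) / ((1 - z) * (1 - r*z)))) := by
        field_simp [ne_of_gt h1rz, ne_of_gt h1z]
        have hX : (1 - z*r) * (1 - z*r)⁻¹ = 1 := mul_inv_cancel₀ (by nlinarith)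
        linear_combination (z*b) * hX
      have hcore := core_ineq r hr0 hr1 hz0 hz1
      rw [← ha, ← hbdef] at hcore
      rw [key]
      have hnum : a * (a + b) - b * (z * (1 - r) / ((1 - z) * (1 - r*z)))< 0 := by
        linarith
      have := div_neg_of_neg_of_pos hnum (pow_pos hap 2)
      linarith
  intro p hp q hq hpq
  obtain ⟨hp0, hp1⟩ := hp
  obtain ⟨hq0, hq1⟩ := hq
  have hrw : ∀ z : ℝ, 0 < z → z < 1 → betaFn r z / z = (H z)⁻¹ := by
    intro z hz0 hz1
    have h1z : 0 < 1 - z := by linarith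
    have h1rz : 0 < 1 - r*z := by nlinarith
    have hap := aux_a_pos hr0 hr1 hz0 hz1
    have hH2 : H z = z * ((Real.log (1 - r*z) - Real.log (1 - z)) + b)
        / (Real.log (1 - r*z) - Real.log (1 - z)) := by
      simp only [hH]
      field_simp [ne_of_gt hap]
      have hY : (Real.log (1 - z*r) - Real.log (1 - z)) * (Real.log (1 - z*r) - Real.log (1 - z))⁻¹ = 1 :=
        mul_inv_cancel₀ (by rw [mul_comm z r]; exact ne_of_gt hap)
      linear_combination -hY
    unfold betaFn
    rw [Real.log_div (ne_of_gt h1z) (ne_of_gt h1rz), hH2, hbdef]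
    have hd1 : Real.log r + (Real.log (1 - z) - Real.log (1 - r*z)) ≠ 0 := by
      have : 0 < (Real.log (1 - r*z) - Real.log (1 - z)) + -Real.log r := by
        linarith
      intro hcon
      apply ne_of_gt this
      linarith
    rw [inv_div]
    rw [div_div]
    rw [div_eq_div_iff]
    · ring
    · intro hcon
      apply hd1
      nlinarith [mul_eq_zero.mp hcon]
    · positivity
  show betaFn r p / p < betaFn r q / q
  rw [hrw p hp0 hp1, hrw q hq0 hq1]
  have hHq : 0 < H q := by
    have haq := aux_a_pos hr0 hr1 hq0 hq1
    have : 0 < b * (q / (Real.log (1 - r*q) - Real.log (1 - q))) :=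
      mul_pos hb (div_pos hq0 haq)
    simp only [hH]
    linarith
  have hHlt : H q < H p := hanti ⟨hp0, hp1⟩ ⟨hq0, hq1⟩ hpq
  exact inv_strictAnti₀ hHq hHlt
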